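/- Let J be a nonempty M-convex subset of ℤ^E_{≥0} (i.e., J satisfies the symmetric basis exchange property). Then the function h_J(A) = max{ Σ_{i∈A} β_i : β ≤ α componentwise for some α ∈ J } defines a polymatroid rank function on E: h_J(∅) = 0, h_J is monotone, and h_J is submodular. -/

import Mathlib

set_option linter.unusedSectionVars false

/-- A set of nonnegative integer vectors satisfies the symmetric basis exchange
property (is M-convex). -/
def MConvex {E : Type*} [DecidableEq E] (J : Set (E → ℕ)) : Prop :=
  ∀ α ∈ J, ∀ β ∈ J, ∀ i : E, β i < α i →
    ∃ j : E, α j < β j ∧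
      (fun k => α k + (if k = j then 1 else 0) - (if k = i then 1 else 0)) ∈ J ∧
      (fun k => β k + (if k = i then 1 else 0) - (if k = j then 1 else 0)) ∈ J

section Aux

variable {E : Type*} [Fintype E] [DecidableEq E]

/-- Sum over A of the "move from i to j" modified vector. -/
lemma sum_move (A : Finset E) (α : E → ℕ) (i j : E) (hi : 1 ≤ α i) :
    ∑ k ∈ A, (α k + (if k = j then 1 else 0) - (if k = i then 1 else 0)) =
      ∑ k ∈ A, α k + (if j ∈ A then 1 else 0) - (if i ∈ A then 1 else 0) := by
  rw [Finset.sum_tsub_distrib]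
  · simp [Finset.sum_add_distrib, Finset.sum_ite_eq']
  · intro k _
    by_cases hk : k = i <;> simp [hk] <;> omega

lemma dist_move (α β : E → ℕ) (i j : E) (hi : β i < α i) (hj : α j < β j) :
    (∑ k, ((α k + (if k = j then 1 else 0) - (if k = i then 1 else 0)) - β k
        + (β k - (α k + (if k = j then 1 else 0) - (if k = i then 1 else 0))))) + 2
      = ∑ k, (α k - β k + (β k - α k)) := by
  have hij : i ≠ j := by intro h; subst h; omega
  have key : ∀ f : E → ℕ,
      ∑ k, f k = f i + (f j + ∑ k ∈ (Finset.univ.erase i).erase j, f k) := by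
    intro f
    rw [← Finset.add_sum_erase _ f (Finset.mem_univ i),
        ← Finset.add_sum_erase _ f
          (by simp [hij.symm] : j ∈ Finset.univ.erase i)]
  rw [key, key]
  have htail : ∑ k ∈ (Finset.univ.erase i).erase j,
      ((α k + (if k = j then 1 else 0) - (if k = i then 1 else 0)) - β k
        + (β k - (α k + (if k = j then 1 else 0) - (if k = i then 1 else 0))))
      = ∑ k ∈ (Finset.univ.erase i).erase j, (α k - β k + (β k - α k)) := by
    apply Finset.sum_congr rfl
    intro k hk
    simp only [Finset.mem_erase] at hk
    simp [hk.1, hk.2.1]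
  rw [htail]
  simp only [if_pos rfl, if_neg hij, if_neg hij.symm, ite_true, add_zero]
  omega

lemma sum_const (J : Set (E → ℕ)) (hJ : MConvex J) :
    ∀ n, ∀ α ∈ J, ∀ β ∈ J, (∑ k, (α k - β k + (β k - α k))) ≤ n →
      ∑ k, α k = ∑ k, β k := by
  have symm : ∀ γ δ : E → ℕ, ∑ k, (γ k - δ k + (δ k - γ k)) =
      ∑ k, (δ k - γ k + (γ k - δ k)) :=
    fun γ δ => Finset.sum_congr rfl (fun k _ => by omega)
  intro n
  induction n with
  | zero =>
    intro α hα β hβ h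
    have h0 : ∀ k ∈ Finset.univ, α k - β k + (β k - α k) = 0 :=
      Finset.sum_eq_zero_iff.mp (Nat.le_zero.mp h)
    exact Finset.sum_congr rfl (fun k _ => by have := h0 k (Finset.mem_univ k); omega)
  | succ n ih =>
    intro α hα β hβ h
    by_cases heq : ∀ k, α k = β k
    · exact Finset.sum_congr rfl (fun k _ => heq k)
    · push_neg at heq
      obtain ⟨k0, hk0⟩ := heq
      rcases Nat.lt_or_ge (β k0) (α k0) with hlt | hge
      · obtain ⟨j, hj, hmem1, _⟩ := hJ α hα β hβ k0 hlt
        have hsm := sum_move Finset.univ α k0 j (by omega)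
        have hdm := dist_move α β k0 j hlt hj
        have hsum' : ∑ k, (α k + (if k = j then 1 else 0) - (if k = k0 then 1 else 0))
            = ∑ k, α k := by rw [hsm]; simp
        have := ih _ hmem1 β hβ (by omega)
        rw [← this, hsum']
      · have hlt : α k0 < β k0 := by omega
        obtain ⟨j, hj, hmem1, _⟩ := hJ β hβ α hα k0 hlt
        have hsm := sum_move Finset.univ β k0 j (by omega)
        have hdm := dist_move β α k0 j hlt hj
        have hsum' : ∑ k, (β k + (if k = j then 1 else 0) - (if k = k0 then 1 else 0))
            = ∑ k, β k := by rw [hsm]; simp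
        have hd2 : (∑ k, (α k - (β k + (if k = j then 1 else 0) - (if k = k0 then 1 else 0))
            + ((β k + (if k = j then 1 else 0) - (if k = k0 then 1 else 0)) - α k))) ≤ n := by
          rw [symm]
          rw [symm α β] at h
          omega
        have := ih α hα _ hmem1 hd2
        rw [this, hsum']

end Aux

theorem stmt10 {E : Type*} [Fintype E] [DecidableEq E] (J : Set (E → ℕ))
    (hJ : MConvex J) (hne : J.Nonempty) :
    let hJfun : Finset E → ℕ := fun A =>
      sSup {s | ∃ α ∈ J, ∃ β : E → ℕ, (∀ i, β i ≤ α i) ∧ s = ∑ i ∈ A, β i}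
    hJfun ∅ = 0 ∧
    (∀ A B : Finset E, A ⊆ B → hJfun A ≤ hJfun B) ∧
    (∀ A B : Finset E, hJfun (A ∪ B) + hJfun (A ∩ B) ≤ hJfun A + hJfun B) := by
  intro hJfun
  obtain ⟨α₀, hα₀⟩ := hne
  have hsum : ∀ α ∈ J, ∑ k, α k = ∑ k, α₀ k := by
    intro α hα
    exact sum_const J hJ _ α hα α₀ hα₀ le_rfl
  set S : Finset E → Set ℕ := fun A =>
    {s | ∃ α ∈ J, ∃ β : E → ℕ, (∀ i, β i ≤ α i) ∧ s = ∑ i ∈ A, β i} with hS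
  have hJdef : ∀ A, hJfun A = sSup (S A) := fun A => rfl
  have hmemS : ∀ (A : Finset E) (α : E → ℕ), α ∈ J → (∑ i ∈ A, α i) ∈ S A :=
    fun A α hα => ⟨α, hα, α, fun i => le_rfl, rfl⟩
  have hbdd : ∀ A : Finset E, BddAbove (S A) := by
    intro A
    refine ⟨∑ k, α₀ k, ?_⟩
    rintro s ⟨α, hα, β, hβ, rfl⟩
    calc ∑ i ∈ A, β i ≤ ∑ i ∈ A, α i := Finset.sum_le_sum (fun i _ => hβ i)
      _ ≤ ∑ k, α k := Finset.sum_le_sum_of_subset (Finset.subset_univ A)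
      _ = ∑ k, α₀ k := hsum α hα
  have hne' : ∀ A : Finset E, (S A).Nonempty := fun A => ⟨_, hmemS A α₀ hα₀⟩
  have hle : ∀ (A : Finset E) (α : E → ℕ), α ∈ J → ∑ i ∈ A, α i ≤ hJfun A :=
    fun A α hα => le_csSup (hbdd A) (hmemS A α hα)
  have hex : ∀ A : Finset E, ∃ α ∈ J, ∑ i ∈ A, α i = hJfun A := by
    intro A
    obtain ⟨α, hα, β, hβ, heq⟩ := Nat.sSup_mem (hne' A) (hbdd A)
    refine ⟨α, hα, le_antisymm (hle A α hα) ?_⟩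
    rw [hJdef, heq]
    exact Finset.sum_le_sum (fun i _ => hβ i)
  refine ⟨?_, ?_, ?_⟩
  · rw [hJdef]
    refine le_antisymm (csSup_le (hne' ∅) ?_) (Nat.zero_le _)
    rintro s ⟨α, hα, β, hβ, rfl⟩
    simp
  · intro A B hAB
    rw [hJdef, hJdef]
    refine csSup_le (hne' A) ?_
    rintro s ⟨α, hα, β, hβ, rfl⟩
    calc ∑ i ∈ A, β i ≤ ∑ i ∈ B, β i :=
          Finset.sum_le_sum_of_subset hAB
      _ ≤ sSup (S B) := le_csSup (hbdd B) ⟨α, hα, β, hβ, rfl⟩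
  · intro A B
    obtain ⟨γ, hγ, hγeq⟩ := hex (A ∩ B)
    obtain ⟨α₁, hα₁, hα₁eq⟩ := hex (A ∪ B)
    have key : ∀ n : ℕ, ∀ α ∈ J, (∑ k, (α k - γ k + (γ k - α k))) ≤ n →
        ∑ i ∈ A ∪ B, α i = hJfun (A ∪ B) →
        ∃ α' ∈ J, ∑ i ∈ A ∪ B, α' i = hJfun (A ∪ B) ∧
          ∑ i ∈ A ∩ B, α' i = hJfun (A ∩ B) := by
      intro n
      induction n with
      | zero =>
        intro α hα hd hmax
        have h0 : ∀ k ∈ Finset.univ, α k - γ k + (γ k - α k) = 0 :=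
          Finset.sum_eq_zero_iff.mp (Nat.le_zero.mp hd)
        refine ⟨α, hα, hmax, ?_⟩
        rw [← hγeq]
        exact Finset.sum_congr rfl
          (fun k _ => by have := h0 k (Finset.mem_univ k); omega)
      | succ n ih =>
        intro α hα hd hmax
        by_cases hcap : ∑ i ∈ A ∩ B, α i = hJfun (A ∩ B)
        · exact ⟨α, hα, hmax, hcap⟩
        · have hlt : ∑ i ∈ A ∩ B, α i < ∑ i ∈ A ∩ B, γ i := by
            have h1 := hle (A ∩ B) α hα
            omega
          have hexi : ∃ i ∈ A ∩ B, α i < γ i := by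
            by_contra hcon
            push_neg at hcon
            have := Finset.sum_le_sum hcon
            omega
          obtain ⟨i, hiAB, hiα⟩ := hexi
          obtain ⟨j, hjlt, _, hmem2⟩ := hJ γ hγ α hα i hiα
          have hαj1 : 1 ≤ α j := by omega
          have hsm := sum_move (A ∪ B) α j i hαj1
          have hiU : i ∈ A ∪ B :=
            Finset.mem_union_left B (Finset.mem_inter.mp hiAB).1
          have hle2 : ∑ k ∈ A ∪ B,
              (α k + (if k = i then 1 else 0) - (if k = j then 1 else 0))
              ≤ hJfun (A ∪ B) := hle (A ∪ B) _ hmem2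
          have hjU : j ∈ A ∪ B := by
            by_contra hj
            rw [hsm] at hle2
            rw [if_pos hiU, if_neg hj] at hle2
            omega
          have hmax' : ∑ k ∈ A ∪ B,
              (α k + (if k = i then 1 else 0) - (if k = j then 1 else 0))
              = hJfun (A ∪ B) := by
            rw [hsm]
            rw [if_pos hiU, if_pos hjU]
            omega
          have hdm := dist_move α γ j i hjlt hiα
          exact ih _ hmem2 (by omega) hmax'
    obtain ⟨α', hα', h1, h2⟩ := key _ α₁ hα₁ le_rfl hα₁eq
    calc hJfun (A ∪ B) + hJfun (A ∩ B)
        = ∑ i ∈ A ∪ B, α' i + ∑ i ∈ A ∩ B, α' i := by rw [h1, h2]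
      _ = ∑ i ∈ A, α' i + ∑ i ∈ B, α' i := Finset.sum_union_inter
      _ ≤ hJfun A + hJfun B := add_le_add (hle A α' hα') (hle B α' hα')
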